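/- Let C and m be integers with C ≤ m ≤ 2(C − 1), and let 0 ≤ p ≤ 1. For X ~ Binomial(m, p), the probability that two bins sharing m objects are both non-full, P(m − C < X < C) = Σ_{x = m−C+1}^{C−1} binom(m, x) p^x (1 − p)^{m−x}, is maximized at p = 1/2: it is at most 2^{−m} Σ_{x = m−C+1}^{C−1} binom(m, x). -/

import Mathlib

open Finset

private lemma telescope_sum (g : ℕ → ℝ) (a b : ℕ) (hab : a ≤ b) :
    ∑ x ∈ Finset.Icc a b, (g (x - 1) - g x) = g (a - 1) - g b := by
  induction b, hab using Nat.le_induction with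
  | base => simp
  | succ b hb ih =>
      rw [Finset.sum_Icc_succ_top (by omega), ih]
      simp

private lemma choose_id_A (m x : ℕ) (hx1 : 1 ≤ x) (hxm : x + 1 ≤ m) :
    m * (m - 1).choose (x - 1) = x * m.choose x := by
  have h := Nat.add_one_mul_choose_eq (m - 1) (x - 1)
  have h1 : m - 1 + 1 = m := by omega
  have h2 : x - 1 + 1 = x := by omega
  simp only [Nat.succ_eq_add_one, h1, h2] at h
  rw [h, Nat.mul_comm]

private lemma choose_id_B (m x : ℕ) (hx1 : 1 ≤ x) (hxm : x + 1 ≤ m) :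
    m * (m - 1).choose x = (m - x) * m.choose x := by
  have h := choose_id_A m (m - x) (by omega) (by omega)
  rw [Nat.choose_symm (by omega : x ≤ m)] at h
  have h1 : m - x - 1 = m - 1 - x := by omega
  rw [h1, Nat.choose_symm (by omega : x ≤ m - 1)] at h
  exact h

private lemma hasDerivAt_term (m x : ℕ) (hx1 : 1 ≤ x) (hxm : x + 1 ≤ m) (p : ℝ) :
    HasDerivAt (fun p : ℝ => (m.choose x : ℝ) * p ^ x * (1 - p) ^ (m - x))
      ((m : ℝ) * (((m - 1).choose (x - 1) : ℝ) * p ^ (x - 1) * (1 - p) ^ (m - 1 - (x - 1))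
        - ((m - 1).choose x : ℝ) * p ^ x * (1 - p) ^ (m - 1 - x))) p := by
  have h1 : HasDerivAt (fun p : ℝ => p ^ x) ((x : ℝ) * p ^ (x - 1)) p := hasDerivAt_pow x p
  have h2 : HasDerivAt (fun p : ℝ => (1 - p) ^ (m - x))
      (((m - x : ℕ) : ℝ) * (1 - p) ^ (m - x - 1) * (-1)) p :=
    (hasDerivAt_pow (m - x) (1 - p)).comp p ((hasDerivAt_id p).const_sub 1)
  have h3 := (h1.mul h2).const_mul ((m.choose x : ℝ))
  have h4 : HasDerivAt (fun p : ℝ => (m.choose x : ℝ) * p ^ x * (1 - p) ^ (m - x))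
      ((m.choose x : ℝ) * ((x : ℝ) * p ^ (x - 1) * (1 - p) ^ (m - x)
        + p ^ x * (((m - x : ℕ) : ℝ) * (1 - p) ^ (m - x - 1) * (-1)))) p := by
    simpa [mul_assoc] using h3
  convert h4 using 1
  have hA : (m : ℝ) * ((m - 1).choose (x - 1) : ℝ) = (x : ℝ) * (m.choose x : ℝ) := by
    exact_mod_cast choose_id_A m x hx1 hxm
  have hB : (m : ℝ) * ((m - 1).choose x : ℝ) = ((m - x : ℕ) : ℝ) * (m.choose x : ℝ) := by
    exact_mod_cast choose_id_B m x hx1 hxm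
  have e1 : m - 1 - (x - 1) = m - x := by omega
  have e2 : m - 1 - x = m - x - 1 := by omega
  rw [e1, e2]
  linear_combination (p ^ (x - 1) * (1 - p) ^ (m - x)) * hA
    - (p ^ x * (1 - p) ^ (m - x - 1)) * hB

private lemma hasDerivAt_f (m a b : ℕ) (ha : 1 ≤ a) (hab : a ≤ b) (habm : a + b = m)
    (p : ℝ) :
    HasDerivAt (fun p : ℝ => ∑ x ∈ Finset.Icc a b,
        (m.choose x : ℝ) * p ^ x * (1 - p) ^ (m - x))
      ((m : ℝ) * (((m - 1).choose (a - 1) : ℝ) * p ^ (a - 1) * (1 - p) ^ (m - 1 - (a - 1))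
        - ((m - 1).choose b : ℝ) * p ^ b * (1 - p) ^ (m - 1 - b))) p := by
  have h := HasDerivAt.fun_sum (u := Finset.Icc a b)
    (A := fun x (p : ℝ) => (m.choose x : ℝ) * p ^ x * (1 - p) ^ (m - x))
    (A' := fun x => (m : ℝ) * (((m - 1).choose (x - 1) : ℝ) * p ^ (x - 1)
        * (1 - p) ^ (m - 1 - (x - 1))
        - ((m - 1).choose x : ℝ) * p ^ x * (1 - p) ^ (m - 1 - x)))
    (fun x hx => by
      rw [Finset.mem_Icc] at hx
      exact hasDerivAt_term m x (by omega) (by omega) p)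
  rw [← Finset.mul_sum,
    telescope_sum (fun x => ((m - 1).choose x : ℝ) * p ^ x * (1 - p) ^ (m - 1 - x)) a b hab] at h
  exact h

private lemma deriv_nonneg (m a b : ℕ) (ha : 1 ≤ a) (hab : a ≤ b) (habm : a + b = m)
    (p : ℝ) (hp0 : 0 ≤ p) (hp1 : p ≤ 1 / 2) :
    0 ≤ (m : ℝ) * (((m - 1).choose (a - 1) : ℝ) * p ^ (a - 1)
        * (1 - p) ^ (m - 1 - (a - 1))
        - ((m - 1).choose b : ℝ) * p ^ b * (1 - p) ^ (m - 1 - b)) := by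
  have e1 : m - 1 - (a - 1) = b := by omega
  have e2 : m - 1 - b = a - 1 := by omega
  have e3 : (m - 1).choose (a - 1) = (m - 1).choose b := by
    have : a - 1 = m - 1 - b := by omega
    rw [this, Nat.choose_symm (by omega)]
  rw [e1, e2, e3]
  have hq0 : 0 ≤ 1 - p := by linarith
  have hpq : p ≤ 1 - p := by linarith
  have key : p ^ b * (1 - p) ^ (a - 1) ≤ p ^ (a - 1) * (1 - p) ^ b := by
    have hb : b = (a - 1) + (b - (a - 1)) := by omega
    rw [hb, pow_add, pow_add]
    have h1 : p ^ (b - (a - 1)) ≤ (1 - p) ^ (b - (a - 1)) :=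
      pow_le_pow_left₀ hp0 hpq _
    calc p ^ (a - 1) * p ^ (b - (a - 1)) * (1 - p) ^ (a - 1)
        ≤ p ^ (a - 1) * (1 - p) ^ (b - (a - 1)) * (1 - p) ^ (a - 1) := by
          apply mul_le_mul_of_nonneg_right _ (pow_nonneg hq0 _)
          exact mul_le_mul_of_nonneg_left h1 (pow_nonneg hp0 _)
      _ = p ^ (a - 1) * ((1 - p) ^ (a - 1) * (1 - p) ^ (b - (a - 1))) := by ring
  have hCb : 0 ≤ ((m - 1).choose b : ℝ) := by positivity
  apply mul_nonneg (Nat.cast_nonneg m)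
  have h4 : ((m - 1).choose b : ℝ) * (p ^ b * (1 - p) ^ (a - 1))
      ≤ ((m - 1).choose b : ℝ) * (p ^ (a - 1) * (1 - p) ^ b) :=
    mul_le_mul_of_nonneg_left key hCb
  linarith [h4]

private lemma symm_sum (m a b : ℕ) (habm : a + b = m) (p : ℝ) :
    ∑ x ∈ Finset.Icc a b, (m.choose x : ℝ) * (1 - p) ^ x * (1 - (1 - p)) ^ (m - x) =
    ∑ x ∈ Finset.Icc a b, (m.choose x : ℝ) * p ^ x * (1 - p) ^ (m - x) := by
  apply Finset.sum_nbij' (i := fun x => m - x) (j := fun x => m - x)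
  · intro x hx; rw [Finset.mem_Icc] at *; omega
  · intro x hx; rw [Finset.mem_Icc] at *; omega
  · intro x hx; rw [Finset.mem_Icc] at hx; omega
  · intro x hx; rw [Finset.mem_Icc] at hx; omega
  · intro x hx
    rw [Finset.mem_Icc] at hx
    have h1 : m - (m - x) = x := by omega
    have h2 : m.choose (m - x) = m.choose x := Nat.choose_symm (by omega)
    rw [h1, h2]
    have h3 : 1 - (1 - p) = p := by ring
    rw [h3]
    ring

private lemma key_mono (m a b : ℕ) (ha : 1 ≤ a) (hab : a ≤ b) (habm : a + b = m) :
    MonotoneOn (fun p : ℝ => ∑ x ∈ Finset.Icc a b,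
        (m.choose x : ℝ) * p ^ x * (1 - p) ^ (m - x)) (Set.Icc 0 (1 / 2)) := by
  apply monotoneOn_of_deriv_nonneg (convex_Icc 0 (1 / 2))
  · exact Continuous.continuousOn (by
      continuity)
  · intro x hx
    exact (hasDerivAt_f m a b ha hab habm x).differentiableAt.differentiableWithinAt
  · intro x hx
    rw [interior_Icc, Set.mem_Ioo] at hx
    rw [(hasDerivAt_f m a b ha hab habm x).deriv]
    exact deriv_nonneg m a b ha hab habm x (le_of_lt hx.1) (le_of_lt hx.2)

theorem binomial_center_prob_le_half
    (C m : ℕ) (hCm : C ≤ m) (hm : m ≤ 2 * (C - 1))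
    (p : ℝ) (hp0 : 0 ≤ p) (hp1 : p ≤ 1) :
    ∑ x ∈ Finset.Icc (m - C + 1) (C - 1),
        (m.choose x : ℝ) * p ^ x * (1 - p) ^ (m - x) ≤
      (2 : ℝ) ^ (-(m : ℤ)) *
        ∑ x ∈ Finset.Icc (m - C + 1) (C - 1), (m.choose x : ℝ) := by
  set a := m - C + 1 with ha_def
  set b := C - 1 with hb_def
  by_cases hne : a ≤ b
  · have ha : 1 ≤ a := by omega
    have habm : a + b = m := by omega
    have hhalf : ∑ x ∈ Finset.Icc a b,
        (m.choose x : ℝ) * (1 / 2 : ℝ) ^ x * (1 - 1 / 2) ^ (m - x)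
        = (2 : ℝ) ^ (-(m : ℤ)) * ∑ x ∈ Finset.Icc a b, (m.choose x : ℝ) := by
      rw [Finset.mul_sum]
      apply Finset.sum_congr rfl
      intro x hx
      rw [Finset.mem_Icc] at hx
      have h1 : (1 : ℝ) - 1 / 2 = 1 / 2 := by norm_num
      rw [h1, mul_assoc, ← pow_add]
      have h2 : x + (m - x) = m := by omega
      rw [h2]
      have h3 : ((1 : ℝ) / 2) ^ m = (2 : ℝ) ^ (-(m : ℤ)) := by
        rw [one_div, inv_pow, ← zpow_natCast, ← zpow_neg]
      rw [h3, mul_comm]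
    rw [← hhalf]
    have hmono := key_mono m a b ha hne habm
    rcases le_or_gt p (1 / 2) with hple | hpgt
    · exact hmono (Set.mem_Icc.mpr ⟨hp0, hple⟩)
        (Set.mem_Icc.mpr ⟨by norm_num, le_refl _⟩) hple
    · have h := hmono (Set.mem_Icc.mpr ⟨by linarith, by linarith⟩)
        (Set.mem_Icc.mpr ⟨by norm_num, le_refl _⟩) (by linarith : 1 - p ≤ 1 / 2)
      calc ∑ x ∈ Finset.Icc a b, (m.choose x : ℝ) * p ^ x * (1 - p) ^ (m - x)
          = ∑ x ∈ Finset.Icc a b,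
              (m.choose x : ℝ) * (1 - (1 - p)) ^ x * (1 - (1 - (1 - p))) ^ (m - x) := by
            apply Finset.sum_congr rfl
            intro x hx
            norm_num
        _ = ∑ x ∈ Finset.Icc a b,
              (m.choose x : ℝ) * (1 - p) ^ x * (1 - (1 - p)) ^ (m - x) := by
            rw [symm_sum m a b habm (1 - p)]
        _ ≤ _ := h
  · rw [Finset.Icc_eq_empty (by omega)]
    simp
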